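/- Let M be an n×n Hermitian positive-definite complex matrix, b a block assignment, M_D the pinching of M with respect to b, and M_off = M − M_D. Then M_D is Hermitian positive definite (in particular invertible with det(M_D) > 0), det(M) > 0, and every eigenvalue of M_D⁻¹ M_off is real and strictly greater than −1. -/

import Mathlib

open Matrix
open scoped ComplexOrder

/-- The pinching (block diagonal part) of a matrix `M` with respect to a
block assignment `b`. -/
def pinch {n k : ℕ} (b : Fin n → Fin k) (M : Matrix (Fin n) (Fin n) ℂ) :
    Matrix (Fin n) (Fin n) ℂ :=
  fun i j => if b i = b j then M i j else 0

private lemma pinch_quadform {n k : ℕ} (b : Fin n → Fin k)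
    (M : Matrix (Fin n) (Fin n) ℂ) (x : Fin n → ℂ) :
    dotProduct (star x) ((pinch b M) *ᵥ x) =
      ∑ c : Fin k, dotProduct (star (fun i => if b i = c then x i else 0))
        (M *ᵥ (fun i => if b i = c then x i else 0)) := by
  simp only [dotProduct, mulVec, Pi.star_apply, pinch]
  rw [Finset.sum_comm]
  refine Finset.sum_congr rfl fun i _ => ?_
  simp_rw [Finset.mul_sum]
  rw [Finset.sum_comm]
  refine Finset.sum_congr rfl fun j _ => ?_
  rw [Finset.sum_eq_single (b i)]
  · rw [if_pos rfl]
    by_cases h : b i = b j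
    · rw [if_pos h, if_pos h.symm]
    · rw [if_neg h, if_neg (fun hh => h hh.symm)]; ring
  · intro c _ hc
    rw [if_neg (fun hh => hc hh.symm)]
    simp
  · simp

private lemma pinch_posDef {n k : ℕ} (b : Fin n → Fin k)
    {M : Matrix (Fin n) (Fin n) ℂ} (hM : M.PosDef) : (pinch b M).PosDef := by
  refine posDef_iff_dotProduct_mulVec.mpr ⟨?_, ?_⟩
  · ext i j
    simp only [conjTranspose_apply, pinch]
    by_cases h : b i = b j
    · rw [if_pos h.symm, if_pos h, hM.1.apply]
    · rw [if_neg (fun hh => h hh.symm), if_neg h, star_zero]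
  · intro x hx
    rw [pinch_quadform]
    obtain ⟨i0, hi0⟩ := Function.ne_iff.mp hx
    refine Finset.sum_pos' (fun c _ => ?_) ⟨b i0, Finset.mem_univ _, ?_⟩
    · by_cases h : (fun i => if b i = c then x i else 0) = 0
      · rw [h]; simp
      · exact le_of_lt (hM.dotProduct_mulVec_pos h)
    · refine hM.dotProduct_mulVec_pos (fun h => hi0 ?_)
      have := congr_fun h i0
      simpa using this

private lemma charpoly_eval {m : ℕ} (A : Matrix (Fin m) (Fin m) ℂ) (μ : ℂ) :
    A.charpoly.eval μ = (μ • (1 : Matrix (Fin m) (Fin m) ℂ) - A).det := by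
  rw [Matrix.charpoly, ← Polynomial.coe_evalRingHom, RingHom.map_det]
  congr 1
  ext i j
  by_cases h : i = j <;>
    simp [h, charmatrix_apply, Matrix.one_apply, Matrix.diagonal_apply]

theorem stmt3 {n k : ℕ}
    (M : Matrix (Fin n) (Fin n) ℂ) (b : Fin n → Fin k)
    (MD Moff : Matrix (Fin n) (Fin n) ℂ)
    (hMD : MD = pinch b M) (hMoff : Moff = M - MD)
    (hM : M.PosDef) :
    MD.PosDef ∧ IsUnit MD.det ∧
      (MD.det.im = 0 ∧ 0 < MD.det.re) ∧
      (M.det.im = 0 ∧ 0 < M.det.re) ∧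
      ∀ μ ∈ (MD⁻¹ * Moff).charpoly.roots, μ.im = 0 ∧ -1 < μ.re := by
  have hD : MD.PosDef := hMD ▸ pinch_posDef b hM
  have hDdet : (0 : ℂ) < MD.det := hD.det_pos
  have hDdet' := Complex.lt_def.mp hDdet
  have hMdet := Complex.lt_def.mp hM.det_pos
  simp only [Complex.zero_re, Complex.zero_im] at hDdet' hMdet
  have hDu : IsUnit MD.det := isUnit_iff_ne_zero.mpr (ne_of_gt hDdet)
  refine ⟨hD, hDu, ⟨hDdet'.2.symm, hDdet'.1⟩, ⟨hMdet.2.symm, hMdet.1⟩, ?_⟩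
  intro μ hμ
  have hroot : ((MD⁻¹ * Moff).charpoly).IsRoot μ :=
    (Polynomial.mem_roots ((MD⁻¹ * Moff).charpoly_monic.ne_zero)).mp hμ
  have h0 : (μ • (1 : Matrix (Fin n) (Fin n) ℂ) - MD⁻¹ * Moff).det = 0 := by
    rw [← charpoly_eval]; exact hroot
  -- multiply by MD
  have h1 : ((μ + 1) • MD - M).det = 0 := by
    have : MD * (μ • (1 : Matrix (Fin n) (Fin n) ℂ) - MD⁻¹ * Moff)
        = (μ + 1) • MD - M := by
      rw [Matrix.mul_sub, ← Matrix.mul_assoc, Matrix.mul_nonsing_inv _ hDu,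
        Matrix.one_mul, hMoff]
      rw [Matrix.mul_smul, Matrix.mul_one, add_smul, one_smul]
      abel
    calc ((μ + 1) • MD - M).det
        = MD.det * (μ • (1 : Matrix (Fin n) (Fin n) ℂ) - MD⁻¹ * Moff).det := by
          rw [← Matrix.det_mul, this]
      _ = 0 := by rw [h0, mul_zero]
  obtain ⟨v, hv, hveq⟩ := (Matrix.exists_mulVec_eq_zero_iff).mpr h1
  have hMv : M *ᵥ v = (μ + 1) • (MD *ᵥ v) := by
    have := sub_eq_zero.mpr (rfl : ((μ + 1) • MD) *ᵥ v = ((μ + 1) • MD) *ᵥ v)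
    have h2 : ((μ + 1) • MD) *ᵥ v - M *ᵥ v = 0 := by
      rw [← Matrix.sub_mulVec]; exact hveq
    have h3 : M *ᵥ v = ((μ + 1) • MD) *ᵥ v := by
      rw [← sub_eq_zero, ← neg_sub, h2, neg_zero]
    rw [h3, Matrix.smul_mulVec]
  set p := dotProduct (star v) (M *ᵥ v) with hp
  set q := dotProduct (star v) (MD *ᵥ v) with hq
  have hppos := Complex.lt_def.mp (hM.dotProduct_mulVec_pos hv)
  have hqpos := Complex.lt_def.mp (hD.dotProduct_mulVec_pos hv)
  simp only [Complex.zero_re, Complex.zero_im, ← hp, ← hq] at hppos hqpos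
  have hpq : p = (μ + 1) * q := by
    rw [hp, hMv, dotProduct_smul, smul_eq_mul]
  have hqim : q.im = 0 := hqpos.2.symm
  have hpim : p.im = 0 := hppos.2.symm
  have h5 : p.re = (μ.re + 1) * q.re - μ.im * q.im := by
    rw [hpq]; simp [Complex.mul_re, Complex.add_re, Complex.add_im]
  have h6 : p.im = (μ.re + 1) * q.im + μ.im * q.re := by
    rw [hpq]; simp [Complex.mul_im, Complex.add_re, Complex.add_im]
  have him : μ.im = 0 := by
    rw [hpim, hqim] at h6
    rcases mul_eq_zero.mp (by linarith : μ.im * q.re = 0) with h | h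
    · exact h
    · exact absurd h (ne_of_gt hqpos.1)
  refine ⟨him, ?_⟩
  rw [hqim] at h5
  nlinarith [hqpos.1, hppos.1]
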